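/- arXiv:1107.5973 — 9 statements merged into one kernel-verified Lean document; each statement's English description precedes it below -/
import Mathlib

section
/- Let G be a group, X a finite subgroup of G, and c ∈ G with c ∉ X. Then 2·|X| ≤ |Q(X ∪ {c})| ≤ 3·|X|. -/
open Pointwise

/-- The right quotient `Q(X) = {x y⁻¹ : x, y ∈ X}` of a subset of a group. -/
def rightQuotient {G : Type*} [Group G] (X : Set G) : Set G :=
  {g | ∃ x ∈ X, ∃ y ∈ X, g = x * y⁻¹}

/-- Subsets `S, T, U` of a group satisfy the Triple Product Property if for all
`s ∈ Q(S)`, `t ∈ Q(T)`, `u ∈ Q(U)`, `s * t * u = 1` iff `s = t = u = 1`. -/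
def TPP {G : Type*} [Group G] (S T U : Set G) : Prop :=
  ∀ s ∈ rightQuotient S, ∀ t ∈ rightQuotient T, ∀ u ∈ rightQuotient U,
    (s * t * u = 1 ↔ s = 1 ∧ t = 1 ∧ u = 1)

theorem stmt_3 {G : Type*} [Group G] (X : Subgroup G) (hfin : (X : Set G).Finite)
    (c : G) (hc : c ∉ X) :
    2 * (X : Set G).ncard ≤ (rightQuotient ((X : Set G) ∪ {c})).ncard ∧
      (rightQuotient ((X : Set G) ∪ {c})).ncard ≤ 3 * (X : Set G).ncard := by
  set S : Set G := (X : Set G) with hS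
  set A : Set G := (fun x => x * c⁻¹) '' S with hA
  set B : Set G := (fun x => c * x⁻¹) '' S with hB
  have hAcard : A.ncard = S.ncard := by
    apply Set.ncard_image_of_injective
    intro a b h; simpa using h
  have hBcard : B.ncard = S.ncard := by
    apply Set.ncard_image_of_injective
    intro a b h
    simp only at h
    have := mul_left_cancel h
    exact inv_injective this
  have hAfin : A.Finite := hfin.image _
  have hBfin : B.Finite := hfin.image _
  have hQ : rightQuotient (S ∪ {c}) = (S ∪ A) ∪ B := by
    ext g
    constructor
    · rintro ⟨x, hx, y, hy, rfl⟩
      rcases hx with hx | hx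
      · rcases hy with hy | hy
        · exact Or.inl (Or.inl (mul_mem hx (inv_mem hy)))
        · rcases hy with rfl
          exact Or.inl (Or.inr ⟨x, hx, rfl⟩)
      · rcases hx with rfl
        rcases hy with hy | hy
        · exact Or.inr ⟨y, hy, rfl⟩
        · rcases hy with rfl
          simp only [mul_inv_cancel]
          exact Or.inl (Or.inl (one_mem X))
    · rintro ((hg | ⟨x, hx, rfl⟩) | ⟨x, hx, rfl⟩)
      · exact ⟨g, Or.inl hg, 1, Or.inl (one_mem X), by simp⟩
      · exact ⟨x, Or.inl hx, c, Or.inr rfl, rfl⟩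
      · exact ⟨c, Or.inr rfl, x, Or.inl hx, rfl⟩
  have hdisj : Disjoint S A := by
    rw [Set.disjoint_left]
    rintro g hg ⟨x, hx, rfl⟩
    have h1 : c⁻¹ ∈ X := by simpa using mul_mem (inv_mem hx) hg
    exact hc (by simpa using inv_mem h1)
  constructor
  · have hsub : S ∪ A ⊆ rightQuotient (S ∪ {c}) := by
      rw [hQ]; exact Set.subset_union_left
    calc 2 * S.ncard = (S ∪ A).ncard := by
          rw [Set.ncard_union_eq hdisj hfin hAfin, hAcard]; ring
      _ ≤ _ := Set.ncard_le_ncard hsub (by rw [hQ]; exact ((hfin.union hAfin).union hBfin))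
  · rw [hQ]
    calc ((S ∪ A) ∪ B).ncard ≤ (S ∪ A).ncard + B.ncard :=
          Set.ncard_union_le _ _
      _ ≤ S.ncard + A.ncard + B.ncard :=
          Nat.add_le_add_right (Set.ncard_union_le _ _) _
      _ = 3 * S.ncard := by rw [hAcard, hBcard]; ring
end

section
/- Let G be a finite group and let (S, T, U) be a TPP triple of nonempty subsets of G. Then |Q(S)| + |Q(T)| + |Q(U)| ≤ |G| + 2. -/
open Pointwise

lemma one_mem_rq {G : Type*} [Group G] {X : Set G} (hX : X.Nonempty) :
    (1 : G) ∈ rightQuotient X := by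
  obtain ⟨x, hx⟩ := hX
  exact ⟨x, hx, x, hx, (mul_inv_cancel x).symm⟩

lemma inv_mem_rq {G : Type*} [Group G] {X : Set G} {g : G} (hg : g ∈ rightQuotient X) :
    g⁻¹ ∈ rightQuotient X := by
  obtain ⟨x, hx, y, hy, rfl⟩ := hg
  exact ⟨y, hy, x, hx, by group⟩

theorem stmt_6 {G : Type*} [Group G] [Finite G] (S T U : Set G)
    (hS : S.Nonempty) (hT : T.Nonempty) (hU : U.Nonempty) (h : TPP S T U) :
    (rightQuotient S).ncard + (rightQuotient T).ncard + (rightQuotient U).ncard ≤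
      Nat.card G + 2 := by
  set A := rightQuotient S
  set B := rightQuotient T
  set C := rightQuotient U
  have h1A : (1 : G) ∈ A := one_mem_rq hS
  have h1B : (1 : G) ∈ B := one_mem_rq hT
  have h1C : (1 : G) ∈ C := one_mem_rq hU
  have hAB : A ∩ B = {1} := by
    ext s
    constructor
    · rintro ⟨hsA, hsB⟩
      have := (h s hsA s⁻¹ (inv_mem_rq hsB) 1 h1C).mp (by group)
      exact this.1
    · rintro rfl; exact ⟨h1A, h1B⟩
  have hABC : (A ∪ B) ∩ C = {1} := by
    ext s
    constructor
    · rintro ⟨hsAB, hsC⟩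
      rcases hsAB with hsA | hsB
      · exact ((h s hsA 1 h1B s⁻¹ (inv_mem_rq hsC)).mp (by group)).1
      · exact ((h 1 h1A s hsB s⁻¹ (inv_mem_rq hsC)).mp (by group)).2.1
    · rintro rfl; exact ⟨Or.inl h1A, h1C⟩
  have e1 : (A ∪ B).ncard + (A ∩ B).ncard = A.ncard + B.ncard :=
    Set.ncard_union_add_ncard_inter A B (Set.toFinite A) (Set.toFinite B)
  have e2 : (A ∪ B ∪ C).ncard + ((A ∪ B) ∩ C).ncard = (A ∪ B).ncard + C.ncard :=
    Set.ncard_union_add_ncard_inter (A ∪ B) C (Set.toFinite _) (Set.toFinite C)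
  rw [hAB] at e1
  rw [hABC] at e2
  simp only [Set.ncard_singleton] at e1 e2
  have hle : (A ∪ B ∪ C).ncard ≤ Nat.card G := by
    calc (A ∪ B ∪ C).ncard ≤ (Set.univ : Set G).ncard := Set.ncard_le_ncard (Set.subset_univ _) (Set.toFinite _)
      _ = Nat.card G := Set.ncard_univ G
  omega
end

section
/- Let G be a finite group and let (S, T, U) be a TPP triple of nonempty subsets of G. Then |S|·(|T| + |U| − 1) ≤ |G|, |T|·(|S| + |U| − 1) ≤ |G|, and |U|·(|S| + |T| − 1) ≤ |G|. -/
open Pointwise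

lemma mem_rq {G : Type*} [Group G] {X : Set G} {a b : G} (ha : a ∈ X) (hb : b ∈ X) :
    a * b⁻¹ ∈ rightQuotient X := ⟨a, ha, b, hb, rfl⟩

lemma rot_eq_one {G : Type*} [Group G] {a b c : G} (h : a * b * c = 1) : c * a * b = 1 := by
  have hc : c = (a * b)⁻¹ := eq_inv_of_mul_eq_one_right h
  rw [hc, mul_assoc, inv_mul_cancel]

lemma tpp_cycle {G : Type*} [Group G] {S T U : Set G} (h : TPP S T U) : TPP T U S := by
  intro t ht u hu s hs
  have key := h s hs t ht u hu
  constructor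
  · intro he
    have := key.mp (rot_eq_one he)
    exact ⟨this.2.1, this.2.2, this.1⟩
  · rintro ⟨h1, h2, h3⟩
    rw [h1, h2, h3]; group

lemma tpp_rev {G : Type*} [Group G] {S T U : Set G} (h : TPP S T U) : TPP U T S := by
  intro u hu t ht s hs
  obtain ⟨a, ha, b, hb, rfl⟩ := hs
  obtain ⟨c, hc, d, hd, rfl⟩ := ht
  obtain ⟨e, he, f, hf, rfl⟩ := hu
  have key := h (b * a⁻¹) (mem_rq hb ha) (d * c⁻¹) (mem_rq hd hc) (f * e⁻¹) (mem_rq hf he)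
  constructor
  · intro heq
    have hprod : b * a⁻¹ * (d * c⁻¹) * (f * e⁻¹) = 1 := by
      have h2 : ((e * f⁻¹) * (c * d⁻¹) * (a * b⁻¹))⁻¹ = 1 := by rw [heq]; group
      rw [← h2]; group
    obtain ⟨p1, p2, p3⟩ := key.mp hprod
    rw [mul_inv_eq_one] at p1 p2 p3
    refine ⟨?_, ?_, ?_⟩
    · rw [p3]; group
    · rw [p2]; group
    · rw [p1]; group
  · rintro ⟨h1, h2, h3⟩
    rw [h1, h2, h3]; group

lemma tpp_key {G : Type*} [Group G] [Finite G] (S T U : Set G)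
    (hS : S.Nonempty) (hT : T.Nonempty) (hU : U.Nonempty) (h : TPP S T U) :
    S.ncard * (T.ncard + U.ncard - 1) ≤ Nat.card G := by
  classical
  obtain ⟨t₀, ht₀⟩ := hT
  obtain ⟨u₀, hu₀⟩ := hU
  set f : G × G → G := fun p => t₀ * p.2⁻¹ * p.1 with hf
  set g : G × G → G := fun p => u₀ * p.2⁻¹ * p.1 with hg
  set A : Set G := f '' (S ×ˢ T) with hA
  set B : Set G := g '' (S ×ˢ U) with hB
  have hinjf : Set.InjOn f (S ×ˢ T) := by
    rintro ⟨s₁, t₁⟩ ⟨hs₁, ht₁⟩ ⟨s₂, t₂⟩ ⟨hs₂, ht₂⟩ heq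
    simp only [hf] at heq
    have h1 : t₁⁻¹ * s₁ = t₂⁻¹ * s₂ :=
      mul_left_cancel (a := t₀)
        (show t₀ * (t₁⁻¹ * s₁) = t₀ * (t₂⁻¹ * s₂) by
          rw [← mul_assoc, ← mul_assoc]; exact heq)
    have h2 : s₂ * s₁⁻¹ = t₂ * t₁⁻¹ := by
      have hs2 : s₂ = t₂ * (t₁⁻¹ * s₁) := by
        rw [h1, ← mul_assoc, mul_inv_cancel, one_mul]
      rw [hs2]
      simp [mul_assoc]
    have hprod : (s₂ * s₁⁻¹) * (t₁ * t₂⁻¹) * 1 = 1 := by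
      rw [h2]; group
    have := (h _ (mem_rq hs₂ hs₁) _ (mem_rq ht₁ ht₂) _ (one_mem_rq ⟨u₀, hu₀⟩)).mp hprod
    obtain ⟨p1, p2, -⟩ := this
    rw [mul_inv_eq_one] at p1 p2
    exact Prod.ext p1.symm p2
  have hinjg : Set.InjOn g (S ×ˢ U) := by
    rintro ⟨s₁, u₁⟩ ⟨hs₁, hu₁⟩ ⟨s₂, u₂⟩ ⟨hs₂, hu₂⟩ heq
    simp only [hg] at heq
    have h1 : u₁⁻¹ * s₁ = u₂⁻¹ * s₂ :=
      mul_left_cancel (a := u₀)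
        (show u₀ * (u₁⁻¹ * s₁) = u₀ * (u₂⁻¹ * s₂) by
          rw [← mul_assoc, ← mul_assoc]; exact heq)
    have h2 : s₂ * s₁⁻¹ = u₂ * u₁⁻¹ := by
      have hs2 : s₂ = u₂ * (u₁⁻¹ * s₁) := by
        rw [h1, ← mul_assoc, mul_inv_cancel, one_mul]
      rw [hs2]
      simp [mul_assoc]
    have hprod : (s₂ * s₁⁻¹) * 1 * (u₁ * u₂⁻¹) = 1 := by
      rw [h2]; group
    have := (h _ (mem_rq hs₂ hs₁) _ (one_mem_rq ⟨t₀, ht₀⟩) _ (mem_rq hu₁ hu₂)).mp hprod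
    obtain ⟨p1, -, p3⟩ := this
    rw [mul_inv_eq_one] at p1 p3
    exact Prod.ext p1.symm p3
  have hUTS : TPP U T S := tpp_rev h
  have hinter : A ∩ B = S := by
    ext x
    constructor
    · rintro ⟨⟨⟨s, t⟩, ⟨hs, ht⟩, hxA⟩, ⟨⟨s', u⟩, ⟨hs', hu⟩, hxB⟩⟩
      simp only [hf, hg] at hxA hxB
      have hprod : (u * u₀⁻¹) * (t₀ * t⁻¹) * (s * s'⁻¹) = 1 := by
        have heq : t₀ * t⁻¹ * s = u₀ * u⁻¹ * s' := by rw [hxA, hxB]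
        have h2 : t₀ * t⁻¹ * (s * s'⁻¹) = u₀ * u⁻¹ := by
          rw [← mul_assoc, heq]; group
        rw [mul_assoc, h2]; group
      have := (hUTS _ (mem_rq hu hu₀) _ (mem_rq ht₀ ht) _ (mem_rq hs hs')).mp hprod
      have et : t = t₀ := by
        have := this.2.1; rw [mul_inv_eq_one] at this; exact this.symm
      have hx : x = s := by rw [← hxA, et]; group
      rw [hx]; exact hs
    · intro hx
      constructor
      · exact ⟨(x, t₀), ⟨hx, ht₀⟩, by simp [hf]⟩
      · exact ⟨(x, u₀), ⟨hx, hu₀⟩, by simp [hg]⟩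
  have cardA : A.ncard = S.ncard * T.ncard := by
    rw [hA, Set.ncard_image_of_injOn hinjf, ← Nat.card_coe_set_eq,
      Nat.card_congr (Equiv.Set.prod S T), Nat.card_prod,
      Nat.card_coe_set_eq, Nat.card_coe_set_eq]
  have cardB : B.ncard = S.ncard * U.ncard := by
    rw [hB, Set.ncard_image_of_injOn hinjg, ← Nat.card_coe_set_eq,
      Nat.card_congr (Equiv.Set.prod S U), Nat.card_prod,
      Nat.card_coe_set_eq, Nat.card_coe_set_eq]
  have hunion : (A ∪ B).ncard + S.ncard = S.ncard * T.ncard + S.ncard * U.ncard := by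
    rw [← cardA, ← cardB, ← hinter]
    exact Set.ncard_union_add_ncard_inter A B (Set.toFinite A) (Set.toFinite B)
  have hle : (A ∪ B).ncard ≤ Nat.card G := by
    rw [← Set.ncard_univ]
    exact Set.ncard_le_ncard (Set.subset_univ _) (Set.toFinite _)
  have hT1 : 1 ≤ T.ncard := (Set.ncard_pos (Set.toFinite T)).mpr ⟨t₀, ht₀⟩
  have e1 : T.ncard + U.ncard - 1 + 1 = T.ncard + U.ncard := by omega
  have key : S.ncard * (T.ncard + U.ncard - 1) + S.ncard
      = S.ncard * T.ncard + S.ncard * U.ncard := by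
    calc S.ncard * (T.ncard + U.ncard - 1) + S.ncard
        = S.ncard * ((T.ncard + U.ncard - 1) + 1) := by rw [Nat.mul_add, Nat.mul_one]
      _ = S.ncard * (T.ncard + U.ncard) := by rw [e1]
      _ = S.ncard * T.ncard + S.ncard * U.ncard := by rw [Nat.mul_add]
  have final : S.ncard * (T.ncard + U.ncard - 1) = (A ∪ B).ncard :=
    Nat.add_right_cancel (by rw [key, hunion])
  rw [final]; exact hle

theorem stmt_7 {G : Type*} [Group G] [Finite G] (S T U : Set G)
    (hS : S.Nonempty) (hT : T.Nonempty) (hU : U.Nonempty) (h : TPP S T U) :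
    S.ncard * (T.ncard + U.ncard - 1) ≤ Nat.card G ∧
      T.ncard * (S.ncard + U.ncard - 1) ≤ Nat.card G ∧
      U.ncard * (S.ncard + T.ncard - 1) ≤ Nat.card G := by
  refine ⟨tpp_key S T U hS hT hU h, ?_, ?_⟩
  · have := tpp_key T U S hT hU hS (tpp_cycle h)
    rwa [add_comm] at this
  · exact tpp_key U S T hU hS hT (tpp_cycle (tpp_cycle h))
end

section
/- Let G be a group and S, T, U nonempty subsets of G. Then (S, T, U) is a basic TPP triple if and only if 1 ∈ S ∩ T ∩ U, Q(T) ∩ Q(U) = {1}, and Q(S) ∩ Q(T)Q(U) = {1}, where Q(T)Q(U) = {tu : t ∈ Q(T), u ∈ Q(U)}. -/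
open Pointwise

theorem stmt_10 {G : Type*} [Group G] (S T U : Set G)
    (hS : S.Nonempty) (hT : T.Nonempty) (hU : U.Nonempty) :
    (TPP S T U ∧ (1 : G) ∈ S ∩ T ∩ U) ↔
      ((1 : G) ∈ S ∩ T ∩ U ∧ rightQuotient T ∩ rightQuotient U = {1} ∧
        rightQuotient S ∩ (rightQuotient T * rightQuotient U) = {1}) := by
  constructor
  · rintro ⟨htpp, h1⟩
    refine ⟨h1, ?_, ?_⟩
    · ext g
      simp only [Set.mem_inter_iff, Set.mem_singleton_iff]
      constructor
      · rintro ⟨hgT, hgU⟩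
        have := (htpp 1 (one_mem_rq hS) g hgT g⁻¹ (inv_mem_rq hgU)).mp (by group)
        exact this.2.1
      · rintro rfl
        exact ⟨one_mem_rq hT, one_mem_rq hU⟩
    · ext g
      simp only [Set.mem_inter_iff, Set.mem_singleton_iff]
      constructor
      · rintro ⟨hgS, t, ht, u, hu, rfl⟩
        have := (htpp (t * u)⁻¹ (inv_mem_rq hgS) t ht u hu).mp (by group)
        rw [this.2.1, this.2.2]; simp
      · rintro rfl
        exact ⟨one_mem_rq hS, 1, one_mem_rq hT, 1, one_mem_rq hU, by simp⟩
  · rintro ⟨h1, hTU, hSTU⟩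
    refine ⟨?_, h1⟩
    intro s hs t ht u hu
    constructor
    · intro hstu
      have hsi : s⁻¹ ∈ rightQuotient S ∩ (rightQuotient T * rightQuotient U) :=
        ⟨inv_mem_rq hs, t, ht, u, hu, eq_inv_of_mul_eq_one_right (by rw [← mul_assoc]; exact hstu)⟩
      rw [hSTU] at hsi
      have hs1 : s = 1 := by
        have := Set.mem_singleton_iff.mp hsi
        simpa using congrArg Inv.inv this
      have htu : t * u = 1 := by rw [hs1] at hstu; simpa using hstu
      have hti : t ∈ rightQuotient T ∩ rightQuotient U := by
        refine ⟨ht, ?_⟩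
        have : t = u⁻¹ := eq_inv_of_mul_eq_one_left htu
        rw [this]; exact inv_mem_rq hu
      rw [hTU] at hti
      have ht1 : t = 1 := hti
      refine ⟨hs1, ht1, ?_⟩
      rw [ht1] at htu; simpa using htu
    · rintro ⟨rfl, rfl, rfl⟩; simp
end

section
/- Let G be a finite abelian group and let (S, T, U) be a TPP triple of nonempty subsets of G. Then |S|·|T|·|U| ≤ |G|. -/
open Pointwise

theorem stmt_12 {G : Type*} [CommGroup G] [Finite G] (S T U : Set G)
    (hS : S.Nonempty) (hT : T.Nonempty) (hU : U.Nonempty) (h : TPP S T U) :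
    S.ncard * T.ncard * U.ncard ≤ Nat.card G := by
  have hinj : Function.Injective (fun x : S × T × U => (x.1 : G) * x.2.1 * x.2.2) := by
    rintro ⟨⟨s1, hs1⟩, ⟨t1, ht1⟩, ⟨u1, hu1⟩⟩ ⟨⟨s2, hs2⟩, ⟨t2, ht2⟩, ⟨u2, hu2⟩⟩ heq
    simp only at heq
    have key : (s1 * s2⁻¹) * (t1 * t2⁻¹) * (u1 * u2⁻¹) = 1 := by
      have h' : s1 * t1 * u1 = s2 * t2 * u2 := heq
      rw [show (s1 * s2⁻¹) * (t1 * t2⁻¹) * (u1 * u2⁻¹)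
          = (s1 * t1 * u1) * (s2 * t2 * u2)⁻¹ from by
        simp [mul_comm, mul_assoc, mul_left_comm], h', mul_inv_cancel]
    have := (h _ ⟨s1, hs1, s2, hs2, rfl⟩ _ ⟨t1, ht1, t2, ht2, rfl⟩ _
      ⟨u1, hu1, u2, hu2, rfl⟩).mp key
    obtain ⟨h1, h2, h3⟩ := this
    have e1 : s1 = s2 := by
      have := mul_inv_eq_one.mp h1; exact this
    have e2 : t1 = t2 := mul_inv_eq_one.mp h2
    have e3 : u1 = u2 := mul_inv_eq_one.mp h3
    simp [e1, e2, e3]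
  calc S.ncard * T.ncard * U.ncard = Nat.card (S × T × U) := by
        simp [Nat.card_prod, Nat.card_coe_set_eq, mul_assoc]
    _ ≤ Nat.card G := Nat.card_le_card_of_injective _ hinj
end

section
/- Let G be a finite group and (S, T, U) a TPP triple of nonempty finite subsets of G. Let A : G × G → ℂ and B : G × G → ℂ be arbitrary functions. For s ∈ S and u ∈ U, the coefficient of the group element s⁻¹u in the product (∑_{s'∈S, t∈T} A(s',t)·(s'⁻¹t)) · (∑_{t'∈T, u'∈U} B(t',u')·(t'⁻¹u')), computed in the group algebra ℂ[G], equals ∑_{t∈T} A(s,t)·B(t,u). -/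
open Pointwise

open MonoidAlgebra in
theorem stmt_13 {G : Type*} [Group G] [Finite G] (S T U : Finset G)
    (hS : S.Nonempty) (hT : T.Nonempty) (hU : U.Nonempty)
    (h : TPP (S : Set G) (T : Set G) (U : Set G))
    (A B : G × G → ℂ) (s : G) (hs : s ∈ S) (u : G) (hu : u ∈ U) :
    ((∑ s' ∈ S, ∑ t ∈ T, MonoidAlgebra.single (s'⁻¹ * t) (A (s', t))) *
        (∑ t' ∈ T, ∑ u' ∈ U, MonoidAlgebra.single (t'⁻¹ * u') (B (t', u')))
        : MonoidAlgebra ℂ G).coeff (s⁻¹ * u) =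
      ∑ t ∈ T, A (s, t) * B (t, u) := by
  classical
  have key : ∀ s' ∈ S, ∀ t ∈ T, ∀ t' ∈ T, ∀ u' ∈ U,
      (s⁻¹ * u = s'⁻¹ * t * (t'⁻¹ * u') ↔ s' = s ∧ t' = t ∧ u' = u) := by
    intro s' hs' t ht t' ht' u' hu'
    have hq := h (s * s'⁻¹) ⟨s, hs, s', hs', rfl⟩ (t * t'⁻¹) ⟨t, ht, t', ht', rfl⟩
      (u' * u⁻¹) ⟨u', hu', u, hu, rfl⟩
    constructor
    · intro he
      have h1 : s * s'⁻¹ * (t * t'⁻¹) * (u' * u⁻¹) = 1 := by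
        have := congrArg (fun g => s * g * u⁻¹) he.symm
        simpa [mul_assoc] using this
      obtain ⟨h1, h2, h3⟩ := hq.mp h1
      refine ⟨?_, ?_, ?_⟩
      · exact (mul_inv_eq_one.mp h1).symm
      · exact (mul_inv_eq_one.mp h2).symm
      · exact mul_inv_eq_one.mp h3
    · rintro ⟨rfl, rfl, rfl⟩
      group
  simp only [Finset.sum_mul, Finset.mul_sum, MonoidAlgebra.single_mul_single]
  simp only [MonoidAlgebra.coeff_sum, Finsupp.coe_finset_sum, Finset.sum_apply]
  calc (∑ t' ∈ T, ∑ u' ∈ U, ∑ s' ∈ S, ∑ t ∈ T,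
        (MonoidAlgebra.single (s'⁻¹ * t * (t'⁻¹ * u')) (A (s', t) * B (t', u')) : MonoidAlgebra ℂ G).coeff (s⁻¹ * u))
      = ∑ t' ∈ T, ∑ u' ∈ U, ∑ s' ∈ S, ∑ t ∈ T,
        if s' = s ∧ t' = t ∧ u' = u then A (s', t) * B (t', u') else 0 := by
        refine Finset.sum_congr rfl fun t' ht' => Finset.sum_congr rfl fun u' hu' =>
          Finset.sum_congr rfl fun s' hs' => Finset.sum_congr rfl fun t ht => ?_
        rw [MonoidAlgebra.single_apply]
        congr 1
        exact propext (eq_comm.trans (key s' hs' t ht t' ht' u' hu'))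
    _ = ∑ t ∈ T, A (s, t) * B (t, u) := by
        simp [ite_and, Finset.sum_ite_eq, Finset.sum_ite_eq', hs, hu]
end

section
/- Let G be a group, let S, T, U be subgroups of G forming a TPP triple (regarded as subsets), and let c ∈ G with c ∉ S. Then (S ∪ {c}, T, U) is a TPP triple if and only if cS ∩ TU = ∅ and Sc⁻¹ ∩ TU = ∅, where cS = {cx : x ∈ S}, Sc⁻¹ = {xc⁻¹ : x ∈ S}, and TU = {tu : t ∈ T, u ∈ U}. -/
open Pointwise

lemma rq_subgroup {G : Type*} [Group G] (S : Subgroup G) :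
    rightQuotient (S : Set G) = (S : Set G) := by
  ext g
  constructor
  · rintro ⟨x, hx, y, hy, rfl⟩
    exact mul_mem hx (inv_mem hy)
  · intro hg
    exact ⟨g, hg, 1, one_mem _, by simp⟩

theorem stmt_14 {G : Type*} [Group G] (S T U : Subgroup G)
    (h : TPP (S : Set G) (T : Set G) (U : Set G)) (c : G) (hc : c ∉ S) :
    TPP ((S : Set G) ∪ {c}) (T : Set G) (U : Set G) ↔
      ((fun x => c * x) '' (S : Set G) ∩ ((T : Set G) * (U : Set G)) = ∅ ∧
        (fun x => x * c⁻¹) '' (S : Set G) ∩ ((T : Set G) * (U : Set G)) = ∅) := by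
  constructor
  · intro h'
    constructor
    · rw [Set.eq_empty_iff_forall_notMem]
      rintro a ⟨⟨s, hs, rfl⟩, t, ht, u, hu, htu⟩
      have htu' : t * u = c * s := htu
      have hsQ : (s⁻¹ * c⁻¹ : G) ∈ rightQuotient ((S : Set G) ∪ {c}) :=
        ⟨s⁻¹, Or.inl (inv_mem hs), c, Or.inr rfl, rfl⟩
      have htQ : t ∈ rightQuotient (T : Set G) := by rw [rq_subgroup]; exact ht
      have huQ : u ∈ rightQuotient (U : Set G) := by rw [rq_subgroup]; exact hu
      have hkey := (h' _ hsQ t htQ u huQ).mp (by rw [mul_assoc, htu']; group)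
      have hcs : c = s⁻¹ := by
        have h1 := hkey.1
        rw [mul_eq_one_iff_eq_inv, inv_inv] at h1
        exact h1.symm
      exact hc (hcs ▸ inv_mem hs)
    · rw [Set.eq_empty_iff_forall_notMem]
      rintro a ⟨⟨s, hs, rfl⟩, t, ht, u, hu, htu⟩
      have htu' : t * u = s * c⁻¹ := htu
      have hsQ : (c * s⁻¹ : G) ∈ rightQuotient ((S : Set G) ∪ {c}) :=
        ⟨c, Or.inr rfl, s, Or.inl hs, rfl⟩
      have htQ : t ∈ rightQuotient (T : Set G) := by rw [rq_subgroup]; exact ht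
      have huQ : u ∈ rightQuotient (U : Set G) := by rw [rq_subgroup]; exact hu
      have hkey := (h' _ hsQ t htQ u huQ).mp (by rw [mul_assoc, htu']; group)
      have hcs : c = s := by
        have h1 := hkey.1
        rwa [mul_inv_eq_one] at h1
      exact hc (hcs ▸ hs)
  · rintro ⟨h1, h2⟩
    rintro s' ⟨x, hx, y, hy, rfl⟩ t htQ u huQ
    have ht : t ∈ (T : Set G) := by rwa [rq_subgroup] at htQ
    have hu : u ∈ (U : Set G) := by rwa [rq_subgroup] at huQ
    constructor
    · intro hprod
      have e : (x * y⁻¹) * (t * u) = 1 := by rw [← mul_assoc]; exact hprod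
      have key : t * u = y * x⁻¹ := by
        have := inv_eq_of_mul_eq_one_left e
        rw [← inv_inv (t * u), this]; group
      rcases hx with hx | hx <;> rcases hy with hy | hy
      · exact (h _ ⟨x, hx, y, hy, rfl⟩ t htQ u huQ).mp hprod
      · exfalso
        simp only [Set.mem_singleton_iff] at hy
        rw [hy] at key
        exact Set.eq_empty_iff_forall_notMem.mp h1 (t * u)
          ⟨⟨x⁻¹, inv_mem hx, key.symm⟩, Set.mul_mem_mul ht hu⟩
      · exfalso
        simp only [Set.mem_singleton_iff] at hx
        rw [hx] at key
        exact Set.eq_empty_iff_forall_notMem.mp h2 (t * u)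
          ⟨⟨y, hy, key.symm⟩, Set.mul_mem_mul ht hu⟩
      · simp only [Set.mem_singleton_iff] at hx hy
        have hs1 : x * y⁻¹ = 1 := by rw [hx, hy]; group
        rw [hs1, one_mul] at hprod
        have := (h 1 (by rw [rq_subgroup]; exact one_mem _) t htQ u huQ).mp
          (by rw [one_mul]; exact hprod)
        exact ⟨hs1, this.2⟩
    · rintro ⟨e1, rfl, rfl⟩
      rw [e1]; simp
end

section
/- Let G be a group, let (S, T, U) be a basic TPP triple of nonempty subsets of G (i.e. a TPP triple with 1 ∈ S ∩ T ∩ U), and let c ∈ G with c ∉ S. Then (S ∪ {c}, T, U) is a TPP triple if and only if cS⁻¹ ∩ Q(T)Q(U) = ∅ and Sc⁻¹ ∩ Q(T)Q(U) = ∅, where cS⁻¹ = {cx⁻¹ : x ∈ S}, Sc⁻¹ = {xc⁻¹ : x ∈ S}, and Q(T)Q(U) = {tu : t ∈ Q(T), u ∈ Q(U)}. -/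
open Pointwise

theorem stmt_15 {G : Type*} [Group G] (S T U : Set G)
    (hS : S.Nonempty) (hT : T.Nonempty) (hU : U.Nonempty)
    (h : TPP S T U) (h1 : (1 : G) ∈ S ∩ T ∩ U) (c : G) (hc : c ∉ S) :
    TPP (S ∪ {c}) T U ↔
      ((fun x => c * x⁻¹) '' S ∩ (rightQuotient T * rightQuotient U) = ∅ ∧
        (fun x => x * c⁻¹) '' S ∩ (rightQuotient T * rightQuotient U) = ∅) := by
  obtain ⟨⟨hS1, hT1⟩, hU1⟩ := h1
  constructor
  · intro H
    constructor
    · rw [Set.eq_empty_iff_forall_notMem]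
      rintro g ⟨⟨x, hx, rfl⟩, t, ht, u, hu, hg⟩
      have hs : x * c⁻¹ ∈ rightQuotient (S ∪ {c}) :=
        ⟨x, Or.inl hx, c, Or.inr rfl, rfl⟩
      have hg' : t * u = c * x⁻¹ := hg
      have := (H _ hs t ht u hu).mp (by rw [mul_assoc, hg']; group)
      have hx1 : x = c := by
        have := this.1
        rwa [mul_inv_eq_one] at this
      exact hc (hx1 ▸ hx)
    · rw [Set.eq_empty_iff_forall_notMem]
      rintro g ⟨⟨x, hx, rfl⟩, t, ht, u, hu, hg⟩
      have hs : c * x⁻¹ ∈ rightQuotient (S ∪ {c}) :=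
        ⟨c, Or.inr rfl, x, Or.inl hx, rfl⟩
      have hg' : t * u = x * c⁻¹ := hg
      have := (H _ hs t ht u hu).mp (by rw [mul_assoc, hg']; group)
      have hx1 : c = x := by
        have := this.1
        rwa [mul_inv_eq_one] at this
      exact hc (hx1 ▸ hx)
  · rintro ⟨h1e, h2e⟩ s hs t ht u hu
    constructor
    · intro hstu
      obtain ⟨x, hx, y, hy, rfl⟩ := hs
      have htu : t * u = (x * y⁻¹)⁻¹ := by
        have h2 : (x * y⁻¹) * (t * u) = 1 := by rw [← mul_assoc]; exact hstu
        exact (inv_eq_of_mul_eq_one_right h2).symm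
      rcases hx with hx | hx <;> rcases hy with hy | hy
      · exact (h _ ⟨x, hx, y, hy, rfl⟩ t ht u hu).mp hstu
      · -- y = c
        simp only [Set.mem_singleton_iff] at hy
        exfalso
        apply Set.eq_empty_iff_forall_notMem.mp h1e (c * x⁻¹)
        exact ⟨⟨x, hx, rfl⟩, t, ht, u, hu,
          show t * u = c * x⁻¹ by rw [htu, hy]; group⟩
      · -- x = c
        simp only [Set.mem_singleton_iff] at hx
        exfalso
        apply Set.eq_empty_iff_forall_notMem.mp h2e (y * c⁻¹)
        exact ⟨⟨y, hy, rfl⟩, t, ht, u, hu,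
          show t * u = y * c⁻¹ by rw [htu, hx]; group⟩
      · simp only [Set.mem_singleton_iff] at hx hy
        have h1Q : (1 : G) ∈ rightQuotient S := ⟨1, hS1, 1, hS1, by simp⟩
        have := (h 1 h1Q t ht u hu).mp (by
          rw [hx, hy] at hstu
          rw [show (1 : G) * t * u = c * c⁻¹ * t * u by group]
          exact hstu)
        exact ⟨by rw [hx, hy]; group, this.2⟩
    · rintro ⟨rfl, rfl, rfl⟩; simp
end

section
/- Let G be a group, let S, T, U be subgroups of G forming a TPP triple (regarded as subsets), and let c ∈ G with c ∉ S. Then Q(S ∪ {c}) ∩ TU = (S ∩ TU) ∪ (cS ∩ TU) ∪ (Sc⁻¹ ∩ TU), and S ∩ TU = {1}, where cS = {cx : x ∈ S}, Sc⁻¹ = {xc⁻¹ : x ∈ S}, and TU = {tu : t ∈ T, u ∈ U}. -/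
open Pointwise

theorem stmt_17 {G : Type*} [Group G] (S T U : Subgroup G)
    (h : TPP (S : Set G) (T : Set G) (U : Set G)) (c : G) (hc : c ∉ S) :
    rightQuotient ((S : Set G) ∪ {c}) ∩ ((T : Set G) * (U : Set G)) =
      ((S : Set G) ∩ ((T : Set G) * (U : Set G))) ∪
        ((fun x => c * x) '' (S : Set G) ∩ ((T : Set G) * (U : Set G))) ∪
        ((fun x => x * c⁻¹) '' (S : Set G) ∩ ((T : Set G) * (U : Set G))) ∧
      (S : Set G) ∩ ((T : Set G) * (U : Set G)) = {1} := by
  have hQ : rightQuotient ((S : Set G) ∪ {c}) =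
      ((S : Set G) ∪ (fun x => c * x) '' (S : Set G)) ∪ (fun x => x * c⁻¹) '' (S : Set G) := by
    ext g
    constructor
    · rintro ⟨x, hx, y, hy, rfl⟩
      rcases hx with hx | rfl
      · rcases hy with hy | rfl
        · exact Or.inl (Or.inl (mul_mem hx (inv_mem hy)))
        · exact Or.inr ⟨x, hx, rfl⟩
      · rcases hy with hy | rfl
        · exact Or.inl (Or.inr ⟨y⁻¹, inv_mem hy, rfl⟩)
        · refine Or.inl (Or.inl ?_); simpa using one_mem S
    · rintro ((hg | ⟨x, hx, rfl⟩) | ⟨x, hx, rfl⟩)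
      · exact ⟨g, Or.inl hg, 1, Or.inl (one_mem S), by simp⟩
      · exact ⟨c, Or.inr rfl, x⁻¹, Or.inl (inv_mem hx), by simp⟩
      · exact ⟨x, Or.inl hx, c, Or.inr rfl, rfl⟩
  constructor
  · rw [hQ, Set.union_inter_distrib_right, Set.union_inter_distrib_right]
  · ext g
    constructor
    · rintro ⟨hgS, t, ht, u, hu, rfl⟩
      have hs : (t * u)⁻¹ ∈ rightQuotient (S : Set G) :=
        ⟨1, one_mem S, t * u, hgS, by simp⟩
      have ht' : t ∈ rightQuotient (T : Set G) := ⟨t, ht, 1, one_mem T, by simp⟩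
      have hu' : u ∈ rightQuotient (U : Set G) := ⟨u, hu, 1, one_mem U, by simp⟩
      have := (h _ hs _ ht' _ hu').mp (by group)
      simp [this.2.1, this.2.2]
    · rintro rfl
      exact ⟨one_mem S, 1, one_mem T, 1, one_mem U, by simp⟩
end
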